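/- (Linear convergence of exact DANE for strongly convex functions.) Under the assumptions of the one-round contraction (δ_A-AHD, μ-strong convexity with μ > 0, λ ≥ δ_A, exact local minimization, standard averaging), after R rounds: f(x^R) − f(x⋆) + (μ/2)‖x^R − x⋆‖² ≤ (μ / (2[(1 + μ/λ)^R − 1])) ‖x^0 − x⋆‖² ≤ (λ/(2R))‖x^0 − x⋆‖². -/

import Mathlib

lemma aux_min_gap {E : Type*} [NormedAddCommGroup E] [InnerProductSpace ℝ E]
    (g : E → ℝ) (G : E → E) (m : ℝ) (hm : 0 ≤ m)
    (hsc : ∀ u v, g v ≥ g u + (inner ℝ (G u) (v - u) : ℝ) + m / 2 * ‖u - v‖ ^ 2)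
    (z : E) (hz : ∀ y, g z ≤ g y) (y : E) :
    g z + m / 2 * ‖y - z‖ ^ 2 ≤ g y := by
  have key : ∀ t : ℝ, 0 < t → t ≤ 1 → m / 2 * (1 - t) * ‖y - z‖ ^ 2 ≤ g y - g z := by
    intro t ht ht1
    set w := z + t • (y - z) with hw
    have h1 := hsc w z
    have h2 := hsc w y
    have hz1 := hz w
    have e1 : z - w = (-t) • (y - z) := by rw [hw]; module
    have e2 : y - w = (1 - t) • (y - z) := by rw [hw]; module
    have n1 : ‖w - z‖ ^ 2 = t ^ 2 * ‖y - z‖ ^ 2 := by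
      have : w - z = t • (y - z) := by rw [hw]; module
      rw [this, norm_smul, mul_pow, Real.norm_eq_abs, sq_abs]
    have n2 : ‖w - y‖ ^ 2 = (1 - t) ^ 2 * ‖y - z‖ ^ 2 := by
      rw [← norm_neg, show -(w - y) = (1 - t) • (y - z) by rw [hw]; module,
        norm_smul, mul_pow, Real.norm_eq_abs, sq_abs]
    have i1 : (inner ℝ (G w) (z - w) : ℝ) = -t * (inner ℝ (G w) (y - z) : ℝ) := by
      rw [e1, real_inner_smul_right]
    have i2 : (inner ℝ (G w) (y - w) : ℝ) = (1 - t) * (inner ℝ (G w) (y - z) : ℝ) := by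
      rw [e2, real_inner_smul_right]
    rw [i1, n1] at h1
    rw [i2, n2] at h2
    nlinarith [mul_le_mul_of_nonneg_left h1 (sub_nonneg.2 ht1),
      mul_le_mul_of_nonneg_left h2 ht.le,
      sq_nonneg ‖y - z‖, mul_nonneg (mul_nonneg hm ht.le) (sq_nonneg ‖y - z‖)]
  rw [← sub_nonneg]
  rw [show g y - (g z + m / 2 * ‖y - z‖ ^ 2) = g y - g z - m / 2 * ‖y - z‖ ^ 2 by ring]
  rw [sub_nonneg, ← sub_nonneg]
  by_contra hcon
  push_neg at hcon
  set c := ‖y - z‖ ^ 2 with hc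
  have hc0 : 0 ≤ c := sq_nonneg _
  set D := m / 2 * c - (g y - g z) with hD
  have hD0 : 0 < D := by simpa [hD] using by linarith [hcon]
  have htpos : 0 < min 1 (D / (m * c + 1)) := by
    apply lt_min one_pos
    positivity
  have := key _ htpos (min_le_left _ _)
  have ht2 : min 1 (D / (m * c + 1)) ≤ D / (m * c + 1) := min_le_right _ _
  set t := min 1 (D / (m * c + 1)) with htdef
  have h3 : m / 2 * t * c ≤ m / 2 * c * (D / (m * c + 1)) := by
    rcases eq_or_lt_of_le hm with h | h
    · simp [← h]
    · rcases eq_or_lt_of_le hc0 with h' | h'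
      · simp [← h']
      · have : t ≤ D / (m * c + 1) := ht2
        nlinarith [div_nonneg hD0.le (by positivity : (0:ℝ) ≤ m * c + 1)]
  have h4 : m / 2 * c * (D / (m * c + 1)) < D := by
    rw [show m / 2 * c * (D / (m * c + 1)) = m / 2 * c * D / (m * c + 1) by ring,
      div_lt_iff₀ (by positivity : (0:ℝ) < m * c + 1)]
    nlinarith [mul_pos hD0 (by positivity : (0:ℝ) < m * c + 1), mul_nonneg hm hc0]
  nlinarith [this]

lemma aux_young {E : Type*} [NormedAddCommGroup E] [InnerProductSpace ℝ E]
    (u v : E) (lam : ℝ) (hlam0 : 0 < lam) :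
    -(1 / (2 * lam)) * ‖u‖ ^ 2 + -(lam / 2) * ‖v‖ ^ 2 ≤ (inner ℝ u v : ℝ) := by
  have h1 : -(‖u‖ * ‖v‖) ≤ (inner ℝ u v : ℝ) :=
    neg_le_of_abs_le (abs_real_inner_le_norm u v)
  have h2 : ‖u‖ * ‖v‖ ≤ 1 / (2 * lam) * ‖u‖ ^ 2 + lam / 2 * ‖v‖ ^ 2 := by
    rw [← sub_nonneg]
    have e : 1 / (2 * lam) * ‖u‖ ^ 2 + lam / 2 * ‖v‖ ^ 2 - ‖u‖ * ‖v‖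
        = (‖u‖ - lam * ‖v‖) ^ 2 / (2 * lam) := by
      field_simp
      ring
    rw [e]
    positivity
  nlinarith [h1, h2, sq_nonneg ‖u‖, sq_nonneg ‖v‖]

set_option maxHeartbeats 4000000 in
theorem stmt_13 {d n : ℕ} (hn : 0 < n) (f : Fin n → EuclideanSpace ℝ (Fin d) → ℝ)
    (hf : ∀ i, ContDiff ℝ 1 (f i)) (μ δA lam : ℝ) (hμ : 0 < μ) (hδ : 0 ≤ δA)
    (hlam : δA ≤ lam) (hlam0 : 0 < lam)
    (hconv : ∀ i, ∀ x y, f i y ≥ f i x + (inner ℝ (gradient (f i) x) (y - x) : ℝ)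
        + μ / 2 * ‖x - y‖ ^ 2)
    (fbar : EuclideanSpace ℝ (Fin d) → ℝ)
    (hfbar : fbar = fun x => (1 / (n : ℝ)) * ∑ i, f i x)
    (hAHD : ∀ x y, (1 / (n : ℝ)) * ∑ i,
      ‖(gradient (f i) x - gradient fbar x) - (gradient (f i) y - gradient fbar y)‖ ^ 2
        ≤ δA ^ 2 * ‖x - y‖ ^ 2)
    (xstar : EuclideanSpace ℝ (Fin d)) (hmin : ∀ y, fbar xstar ≤ fbar y)
    (x : ℕ → EuclideanSpace ℝ (Fin d))
    (xl : Fin n → ℕ → EuclideanSpace ℝ (Fin d))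
    (F : Fin n → ℕ → EuclideanSpace ℝ (Fin d) → ℝ)
    (hF : ∀ i r, F i r = fun z => f i z
        - (inner ℝ z (gradient (f i) (x r) - gradient fbar (x r)) : ℝ)
        + lam / 2 * ‖z - x r‖ ^ 2)
    (hxl : ∀ i r, ∀ y, F i r (xl i (r + 1)) ≤ F i r y)
    (havg : ∀ r : ℕ, x (r + 1) = (n : ℝ)⁻¹ • ∑ i, xl i (r + 1))
    (R : ℕ) (hR : 1 ≤ R) :
    fbar (x R) - fbar xstar + μ / 2 * ‖x R - xstar‖ ^ 2
      ≤ μ / (2 * ((1 + μ / lam) ^ R - 1)) * ‖x 0 - xstar‖ ^ 2 ∧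
    μ / (2 * ((1 + μ / lam) ^ R - 1)) * ‖x 0 - xstar‖ ^ 2
      ≤ lam / (2 * R) * ‖x 0 - xstar‖ ^ 2 := by
  have hnR : (0:ℝ) < n := Nat.cast_pos.mpr hn
  have hnne : (n:ℝ) ≠ 0 := ne_of_gt hnR
  have hlamne : lam ≠ 0 := ne_of_gt hlam0
  have hfb : ∀ w, ∑ i, f i w = (n:ℝ) * fbar w := by
    intro w; rw [hfbar]; field_simp
  have hgradbar : ∀ w, gradient fbar w = (1/(n:ℝ)) • ∑ i, gradient (f i) w := by
    intro w
    have hd : ∀ i, DifferentiableAt ℝ (f i) w := fun i =>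
      ((hf i).differentiable one_ne_zero).differentiableAt
    have hsum : DifferentiableAt ℝ (fun z => ∑ i, f i z) w :=
      DifferentiableAt.fun_sum fun i _ => hd i
    rw [hfbar]
    unfold gradient
    rw [fderiv_const_mul hsum, fderiv_fun_sum (fun i _ => hd i), map_smul, map_sum]
  have hs0 : ∀ w, ∑ i, (gradient (f i) w - gradient fbar w) = 0 := by
    intro w
    rw [Finset.sum_sub_distrib, Finset.sum_const, Finset.card_univ, Fintype.card_fin,
      hgradbar w, ← Nat.cast_smul_eq_nsmul ℝ, smul_smul,
      show (n:ℝ) * (1/(n:ℝ)) = 1 by field_simp, one_smul, sub_self]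
  have hFgap : ∀ i r yy, F i r (xl i (r + 1)) + (μ + lam) / 2 * ‖yy - xl i (r + 1)‖ ^ 2
      ≤ F i r yy := by
    intro i r yy
    refine aux_min_gap (F i r)
      (fun z => gradient (f i) z - (gradient (f i) (x r) - gradient fbar (x r))
        + lam • (z - x r))
      (μ + lam) (by positivity) ?_ (xl i (r + 1)) (hxl i r) yy
    intro u v
    simp only [hF]
    have hcv := hconv i u v
    have hq : ‖v - x r‖ ^ 2 = ‖u - x r‖ ^ 2 + 2 * (inner ℝ (u - x r) (v - u) : ℝ)
        + ‖v - u‖ ^ 2 := by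
      rw [show v - x r = (u - x r) + (v - u) by abel, norm_add_sq_real]
    have hi : (inner ℝ (gradient (f i) u - (gradient (f i) (x r) - gradient fbar (x r))
          + lam • (u - x r)) (v - u) : ℝ)
        = (inner ℝ (gradient (f i) u) (v - u) : ℝ)
          - (inner ℝ (gradient (f i) (x r) - gradient fbar (x r)) (v - u) : ℝ)
          + lam * (inner ℝ (u - x r) (v - u) : ℝ) := by
      rw [inner_add_left, inner_sub_left, real_inner_smul_left]
    have hv : (inner ℝ v (gradient (f i) (x r) - gradient fbar (x r)) : ℝ)
        - (inner ℝ u (gradient (f i) (x r) - gradient fbar (x r)) : ℝ)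
        = (inner ℝ (gradient (f i) (x r) - gradient fbar (x r)) (v - u) : ℝ) := by
      rw [← inner_sub_left, real_inner_comm]
    have hn' : ‖u - v‖ ^ 2 = ‖v - u‖ ^ 2 := by rw [norm_sub_rev]
    have hq2 : lam / 2 * ‖v - x r‖ ^ 2 = lam / 2 * ‖u - x r‖ ^ 2
        + lam * (inner ℝ (u - x r) (v - u) : ℝ) + lam / 2 * ‖v - u‖ ^ 2 := by
      rw [hq]; ring
    have hn2 : (μ + lam) / 2 * ‖u - v‖ ^ 2 = μ / 2 * ‖u - v‖ ^ 2 + lam / 2 * ‖v - u‖ ^ 2 := by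
      rw [hn']; ring
    rw [ge_iff_le]
    linarith [hcv, hi, hv, hq2, hn2]
  have key : ∀ r yy, fbar (x (r + 1)) + (μ + lam) / 2 * ‖yy - x (r + 1)‖ ^ 2
      ≤ fbar yy + lam / 2 * ‖yy - x r‖ ^ 2 := by
    intro r yy
    have hpq : (n:ℝ) • x (r + 1) = ∑ i, xl i (r + 1) := by
      rw [havg r, smul_smul, mul_inv_cancel₀ hnne, one_smul]
    have hU0 : ∑ i, (xl i (r + 1) - x (r + 1)) = 0 := by
      rw [Finset.sum_sub_distrib, Finset.sum_const, Finset.card_univ, Fintype.card_fin,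
        ← Nat.cast_smul_eq_nsmul ℝ, hpq, sub_self]
    have hA : ∑ i, (F i r (xl i (r + 1)) + (μ + lam) / 2 * ‖yy - xl i (r + 1)‖ ^ 2)
        ≤ ∑ i, F i r yy := Finset.sum_le_sum (fun i _ => hFgap i r yy)
    have hAL : ∑ i, (F i r (xl i (r + 1)) + (μ + lam) / 2 * ‖yy - xl i (r + 1)‖ ^ 2)
        = ∑ i, F i r (xl i (r + 1)) + (μ + lam) / 2 * ∑ i, ‖yy - xl i (r + 1)‖ ^ 2 := by
      rw [Finset.sum_add_distrib, Finset.mul_sum]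
    have hB : ∑ i, F i r yy = (n:ℝ) * fbar yy + (n:ℝ) * (lam / 2 * ‖yy - x r‖ ^ 2) := by
      simp only [hF]
      rw [Finset.sum_add_distrib, Finset.sum_sub_distrib, ← inner_sum, hs0 (x r),
        inner_zero_right, hfb yy, Finset.sum_const, Finset.card_univ, Fintype.card_fin,
        nsmul_eq_mul]
      ring
    have hExp : ∑ i, F i r (xl i (r + 1)) = ∑ i, f i (xl i (r + 1))
        - ∑ i, (inner ℝ (xl i (r + 1)) (gradient (f i) (x r) - gradient fbar (x r)) : ℝ)
        + lam / 2 * ∑ i, ‖xl i (r + 1) - x r‖ ^ 2 := by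
      simp only [hF]
      rw [Finset.sum_add_distrib, Finset.sum_sub_distrib, Finset.mul_sum]
    have hC1 : (n:ℝ) * fbar (x (r + 1))
        + ∑ i, (inner ℝ (gradient (f i) (x (r + 1))) (xl i (r + 1) - x (r + 1)) : ℝ)
        + μ / 2 * ∑ i, ‖xl i (r + 1) - x (r + 1)‖ ^ 2 ≤ ∑ i, f i (xl i (r + 1)) := by
      have h := Finset.sum_le_sum
        (fun i (_ : i ∈ Finset.univ) => hconv i (x (r + 1)) (xl i (r + 1)))
      have e : ∑ i, (f i (x (r + 1)) + (inner ℝ (gradient (f i) (x (r + 1))) (xl i (r + 1) - x (r + 1)) : ℝ)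
            + μ / 2 * ‖x (r + 1) - xl i (r + 1)‖ ^ 2)
          = (n:ℝ) * fbar (x (r + 1))
            + ∑ i, (inner ℝ (gradient (f i) (x (r + 1))) (xl i (r + 1) - x (r + 1)) : ℝ)
            + μ / 2 * ∑ i, ‖xl i (r + 1) - x (r + 1)‖ ^ 2 := by
        simp only [norm_sub_rev (x (r + 1))]
        rw [Finset.sum_add_distrib, Finset.sum_add_distrib, hfb, Finset.mul_sum]
      rw [e] at h
      exact h
    have hC2 : ∑ i, (inner ℝ (gradient (f i) (x (r + 1))) (xl i (r + 1) - x (r + 1)) : ℝ)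
        = ∑ i, (inner ℝ (gradient (f i) (x (r + 1)) - gradient fbar (x (r + 1))) (xl i (r + 1) - x (r + 1)) : ℝ) := by
      have e : ∀ i : Fin n, (inner ℝ (gradient (f i) (x (r + 1))) (xl i (r + 1) - x (r + 1)) : ℝ)
          = (inner ℝ (gradient (f i) (x (r + 1)) - gradient fbar (x (r + 1))) (xl i (r + 1) - x (r + 1)) : ℝ) + (inner ℝ (gradient fbar (x (r + 1))) (xl i (r + 1) - x (r + 1)) : ℝ) := by
        intro i
        rw [← inner_add_left]
        congr 1
        abel
      rw [Finset.sum_congr rfl fun i _ => e i, Finset.sum_add_distrib, ← inner_sum,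
        hU0, inner_zero_right, add_zero]
    have hC3 : ∑ i, (inner ℝ (xl i (r + 1)) (gradient (f i) (x r) - gradient fbar (x r)) : ℝ)
        = ∑ i, (inner ℝ (xl i (r + 1) - x (r + 1)) (gradient (f i) (x r) - gradient fbar (x r)) : ℝ) := by
      have e : ∀ i : Fin n, (inner ℝ (xl i (r + 1)) (gradient (f i) (x r) - gradient fbar (x r)) : ℝ)
          = (inner ℝ (xl i (r + 1) - x (r + 1)) (gradient (f i) (x r) - gradient fbar (x r)) : ℝ) + (inner ℝ (x (r + 1)) (gradient (f i) (x r) - gradient fbar (x r)) : ℝ) := by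
        intro i
        rw [← inner_add_left]
        congr 1
        abel
      rw [Finset.sum_congr rfl fun i _ => e i, Finset.sum_add_distrib, ← inner_sum,
        hs0 (x r), inner_zero_right, add_zero]
    have hC4 : ∑ i, ((inner ℝ (gradient (f i) (x (r + 1)) - gradient fbar (x (r + 1))) (xl i (r + 1) - x (r + 1)) : ℝ) - (inner ℝ (xl i (r + 1) - x (r + 1)) (gradient (f i) (x r) - gradient fbar (x r)) : ℝ))
        = ∑ i, (inner ℝ (gradient (f i) (x (r + 1)) - gradient fbar (x (r + 1)) - (gradient (f i) (x r) - gradient fbar (x r))) (xl i (r + 1) - x (r + 1)) : ℝ) := by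
      refine Finset.sum_congr rfl fun i _ => ?_
      have h1 : (inner ℝ (gradient (f i) (x (r + 1)) - gradient fbar (x (r + 1)) - (gradient (f i) (x r) - gradient fbar (x r))) (xl i (r + 1) - x (r + 1)) : ℝ)
          = (inner ℝ (gradient (f i) (x (r + 1)) - gradient fbar (x (r + 1))) (xl i (r + 1) - x (r + 1)) : ℝ)
            - (inner ℝ (gradient (f i) (x r) - gradient fbar (x r)) (xl i (r + 1) - x (r + 1)) : ℝ) :=
        inner_sub_left _ _ _
      have h2 : (inner ℝ (xl i (r + 1) - x (r + 1)) (gradient (f i) (x r) - gradient fbar (x r)) : ℝ)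
          = (inner ℝ (gradient (f i) (x r) - gradient fbar (x r)) (xl i (r + 1) - x (r + 1)) : ℝ) :=
        real_inner_comm _ _
      rw [h1, h2]
    have hC4' : ∑ i, ((inner ℝ (gradient (f i) (x (r + 1)) - gradient fbar (x (r + 1))) (xl i (r + 1) - x (r + 1)) : ℝ) - (inner ℝ (xl i (r + 1) - x (r + 1)) (gradient (f i) (x r) - gradient fbar (x r)) : ℝ))
        = ∑ i, (inner ℝ (gradient (f i) (x (r + 1)) - gradient fbar (x (r + 1))) (xl i (r + 1) - x (r + 1)) : ℝ) - ∑ i, (inner ℝ (xl i (r + 1) - x (r + 1)) (gradient (f i) (x r) - gradient fbar (x r)) : ℝ) :=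
      Finset.sum_sub_distrib _ _
    have hY : ∑ i, (-(1 / (2 * lam)) * ‖(gradient (f i) (x (r + 1)) - gradient fbar (x (r + 1)) - (gradient (f i) (x r) - gradient fbar (x r)))‖ ^ 2 + -(lam / 2) * ‖(xl i (r + 1) - x (r + 1))‖ ^ 2)
        ≤ ∑ i, (inner ℝ (gradient (f i) (x (r + 1)) - gradient fbar (x (r + 1)) - (gradient (f i) (x r) - gradient fbar (x r))) (xl i (r + 1) - x (r + 1)) : ℝ) :=
      Finset.sum_le_sum fun i _ => aux_young _ _ lam hlam0
    have hYL : ∑ i, (-(1 / (2 * lam)) * ‖(gradient (f i) (x (r + 1)) - gradient fbar (x (r + 1)) - (gradient (f i) (x r) - gradient fbar (x r)))‖ ^ 2 + -(lam / 2) * ‖(xl i (r + 1) - x (r + 1))‖ ^ 2)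
        = -(1 / (2 * lam)) * ∑ i, ‖(gradient (f i) (x (r + 1)) - gradient fbar (x (r + 1)) - (gradient (f i) (x r) - gradient fbar (x r)))‖ ^ 2 + -(lam / 2) * ∑ i, ‖(xl i (r + 1) - x (r + 1))‖ ^ 2 := by
      rw [Finset.sum_add_distrib, ← Finset.mul_sum, ← Finset.mul_sum]
    have hAHD' : ∑ i, ‖(gradient (f i) (x (r + 1)) - gradient fbar (x (r + 1)) - (gradient (f i) (x r) - gradient fbar (x r)))‖ ^ 2 ≤ (n:ℝ) * (δA ^ 2 * ‖x (r + 1) - x r‖ ^ 2) := by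
      have h := hAHD (x (r + 1)) (x r)
      have e : ∑ i, ‖(gradient (f i) (x (r + 1)) - gradient fbar (x (r + 1)) - (gradient (f i) (x r) - gradient fbar (x r)))‖ ^ 2 = (n:ℝ) * ((1 / (n:ℝ)) * ∑ i, ‖(gradient (f i) (x (r + 1)) - gradient fbar (x (r + 1)) - (gradient (f i) (x r) - gradient fbar (x r)))‖ ^ 2) := by
        field_simp
      rw [e]
      exact mul_le_mul_of_nonneg_left h hnR.le
    have hstep1 : (1 / (2 * lam)) * ∑ i, ‖(gradient (f i) (x (r + 1)) - gradient fbar (x (r + 1)) - (gradient (f i) (x r) - gradient fbar (x r)))‖ ^ 2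
        ≤ (1 / (2 * lam)) * ((n:ℝ) * (δA ^ 2 * ‖x (r + 1) - x r‖ ^ 2)) :=
      mul_le_mul_of_nonneg_left hAHD' (by positivity)
    have hcmp : (1 / (2 * lam)) * ((n:ℝ) * (δA ^ 2 * ‖x (r + 1) - x r‖ ^ 2))
        ≤ lam / 2 * ((n:ℝ) * ‖x (r + 1) - x r‖ ^ 2) := by
      have e : lam / 2 * ((n:ℝ) * ‖x (r + 1) - x r‖ ^ 2)
          - (1 / (2 * lam)) * ((n:ℝ) * (δA ^ 2 * ‖x (r + 1) - x r‖ ^ 2))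
          = (n:ℝ) * ‖x (r + 1) - x r‖ ^ 2 * (lam ^ 2 - δA ^ 2) / (2 * lam) := by
        field_simp
      have h2 : 0 ≤ (n:ℝ) * ‖x (r + 1) - x r‖ ^ 2 * (lam ^ 2 - δA ^ 2) / (2 * lam) := by
        apply div_nonneg _ (by positivity)
        apply mul_nonneg (mul_nonneg hnR.le (sq_nonneg _))
        nlinarith
      linarith [e, h2]
    have hC6 : ∑ i, ‖xl i (r + 1) - x r‖ ^ 2
        = (n:ℝ) * ‖x (r + 1) - x r‖ ^ 2 + ∑ i, ‖xl i (r + 1) - x (r + 1)‖ ^ 2 := by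
      have e : ∀ i : Fin n, ‖xl i (r + 1) - x r‖ ^ 2
          = ‖xl i (r + 1) - x (r + 1)‖ ^ 2
            + 2 * (inner ℝ (xl i (r + 1) - x (r + 1)) (x (r + 1) - x r) : ℝ) + ‖x (r + 1) - x r‖ ^ 2 := by
        intro i
        rw [show xl i (r + 1) - x r = (xl i (r + 1) - x (r + 1)) + (x (r + 1) - x r) by abel, norm_add_sq_real]
      rw [Finset.sum_congr rfl fun i _ => e i, Finset.sum_add_distrib,
        Finset.sum_add_distrib, ← Finset.mul_sum, ← sum_inner, hU0, inner_zero_left,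
        mul_zero, add_zero, Finset.sum_const, Finset.card_univ, Fintype.card_fin,
        nsmul_eq_mul]
      ring
    have hC7 : ∑ i, ‖yy - xl i (r + 1)‖ ^ 2
        = (n:ℝ) * ‖yy - x (r + 1)‖ ^ 2 + ∑ i, ‖xl i (r + 1) - x (r + 1)‖ ^ 2 := by
      have e : ∀ i : Fin n, ‖yy - xl i (r + 1)‖ ^ 2
          = ‖yy - x (r + 1)‖ ^ 2 - 2 * (inner ℝ (yy - x (r + 1)) (xl i (r + 1) - x (r + 1)) : ℝ)
            + ‖(xl i (r + 1) - x (r + 1))‖ ^ 2 := by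
        intro i
        rw [show yy - xl i (r + 1) = (yy - x (r + 1)) - (xl i (r + 1) - x (r + 1)) by abel, norm_sub_sq_real]
      rw [Finset.sum_congr rfl fun i _ => e i, Finset.sum_add_distrib,
        Finset.sum_sub_distrib, ← Finset.mul_sum, ← inner_sum, hU0, inner_zero_right,
        mul_zero, sub_zero, Finset.sum_const, Finset.card_univ, Fintype.card_fin,
        nsmul_eq_mul]
    have hV0 : 0 ≤ ∑ i, ‖xl i (r + 1) - x (r + 1)‖ ^ 2 :=
      Finset.sum_nonneg fun i _ => sq_nonneg _
    have hfinal : (n:ℝ) * (fbar (x (r + 1)) + (μ + lam) / 2 * ‖yy - x (r + 1)‖ ^ 2)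
        ≤ (n:ℝ) * (fbar yy + lam / 2 * ‖yy - x r‖ ^ 2) := by
      nlinarith [hA, hAL, hB, hExp, hC1, hC2, hC3, hC4, hC4', hY, hYL, hstep1, hcmp,
        hC6, hC7, hV0, mul_nonneg hμ.le hV0, mul_nonneg hlam0.le hV0]
    exact le_of_mul_le_mul_left hfinal hnR
  have hmono : ∀ r, fbar (x (r + 1)) ≤ fbar (x r) := by
    intro r
    have h := key r (x r)
    rw [sub_self, norm_zero] at h
    nlinarith [h, mul_nonneg (by positivity : (0:ℝ) ≤ (μ + lam) / 2)
      (sq_nonneg ‖x r - x (r + 1)‖)]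
  have hstep : ∀ r, lam / 2 * (1 + μ / lam) * ‖x (r + 1) - xstar‖ ^ 2
      + (fbar (x (r + 1)) - fbar xstar) ≤ lam / 2 * ‖x r - xstar‖ ^ 2 := by
    intro r
    have h := key r xstar
    rw [norm_sub_rev xstar (x (r + 1)), norm_sub_rev xstar (x r)] at h
    rw [show lam / 2 * (1 + μ / lam) = (μ + lam) / 2 by field_simp; ring]
    linarith [h]
  have hind : ∀ m : ℕ, lam / 2 * (1 + μ / lam) ^ m * ‖x m - xstar‖ ^ 2
      + (∑ r ∈ Finset.range m, (1 + μ / lam) ^ r) * (fbar (x m) - fbar xstar)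
      ≤ lam / 2 * ‖x 0 - xstar‖ ^ 2 := by
    intro m
    induction m with
    | zero => simp
    | succ k ih =>
      have hS0 : (0:ℝ) ≤ ∑ r ∈ Finset.range k, (1 + μ / lam) ^ r :=
        Finset.sum_nonneg fun r _ => pow_nonneg (by positivity) r
      have hρR : (0:ℝ) ≤ (1 + μ / lam) ^ k := pow_nonneg (by positivity) k
      have h1 := hstep k
      have h2 : fbar (x (k + 1)) - fbar xstar ≤ fbar (x k) - fbar xstar := by
        linarith [hmono k]
      rw [Finset.sum_range_succ, pow_succ]
      nlinarith [mul_le_mul_of_nonneg_left h1 hρR, mul_le_mul_of_nonneg_left h2 hS0, ih]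
  have hρ : (1:ℝ) < 1 + μ / lam := by
    have := div_pos hμ hlam0
    linarith
  have hΔ : 1 < (1 + μ / lam) ^ R := one_lt_pow₀ hρ (by omega)
  have hΔ0 : (0:ℝ) < (1 + μ / lam) ^ R - 1 := by linarith
  have hμne : μ ≠ 0 := ne_of_gt hμ
  have hS' : μ * ∑ r ∈ Finset.range R, (1 + μ / lam) ^ r
      = ((1 + μ / lam) ^ R - 1) * lam := by
    set P := (1 + μ / lam) ^ R with hP
    rw [geom_sum_eq (ne_of_gt hρ) R, ← hP, show (1:ℝ) + μ / lam - 1 = μ / lam by ring]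
    field_simp
  have hindR := hind R
  have hind2 := mul_le_mul_of_nonneg_left hindR hμ.le
  have hsub : μ * ((∑ r ∈ Finset.range R, (1 + μ / lam) ^ r)
        * (fbar (x R) - fbar xstar))
      = ((1 + μ / lam) ^ R - 1) * lam * (fbar (x R) - fbar xstar) := by
    rw [← mul_assoc, hS']
  constructor
  · rw [show μ / (2 * ((1 + μ / lam) ^ R - 1)) * ‖x 0 - xstar‖ ^ 2
        = μ * ‖x 0 - xstar‖ ^ 2 / (2 * ((1 + μ / lam) ^ R - 1)) by ring,
      le_div_iff₀ (by positivity : (0:ℝ) < 2 * ((1 + μ / lam) ^ R - 1))]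
    apply le_of_mul_le_mul_right _ hlam0
    nlinarith [hind2, hsub,
      mul_nonneg (mul_nonneg hμ.le hlam0.le) (sq_nonneg ‖x R - xstar‖), hΔ0]
  · have hR0 : (0:ℝ) < R := by
      exact_mod_cast Nat.cast_pos.mpr (by omega : 0 < R)
    have hber : 1 + (R:ℝ) * (μ / lam) ≤ (1 + μ / lam) ^ R :=
      one_add_mul_le_pow (by nlinarith [div_pos hμ hlam0] : (-2:ℝ) ≤ μ / lam) R
    have hcoef : μ / (2 * ((1 + μ / lam) ^ R - 1)) ≤ lam / (2 * (R:ℝ)) := by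
      rw [div_le_div_iff₀ (by positivity) (by positivity)]
      have h5 := mul_le_mul_of_nonneg_left hber hlam0.le
      have h6 : lam * (1 + (R:ℝ) * (μ / lam)) = lam + (R:ℝ) * μ := by
        field_simp
      nlinarith [h5, h6]
    exact mul_le_mul_of_nonneg_right hcoef (sq_nonneg _)
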